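/- Let η > 0 and 0 < ε < 1/2. Suppose F, G : [−η, η] → ℝ satisfy |F(0)|, |G(0)| ≤ 10⁻³η and Lip(F), Lip(G) ≤ ε. Then F and G map [−10⁻²η, 10⁻²η] into itself, the composition G∘F has a unique fixed point w in [−10⁻²η, 10⁻²η], and setting v := F(w), the point (v, w) satisfies v = F(w), w = G(v), and |v|, |w| ≤ 10⁻²η. Moreover (v, w) is the unique point with v = F(w) and w = G(v) in [−η, η]². -/

import Mathlib

/-- Intersection of admissible graphs: if `|F(0)|, |G(0)| ≤ 10⁻³η` and `F, G` are
ε-Lipschitz on `[-η, η]` with `0 < ε < 1/2`, then `F` and `G` map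
`[-10⁻²η, 10⁻²η]` into itself, `G ∘ F` has a unique fixed point `w` there, and with
`v := F w` one has `v = F w`, `w = G v`, `|v|, |w| ≤ 10⁻²η`; moreover `(v, w)` is the
unique solution of `v = F w`, `w = G v` in `[-η, η]²`. -/
theorem admissible_graphs_intersect (η ε : ℝ) (hη : 0 < η) (hε0 : 0 < ε) (hε : ε < 1 / 2)
    (F G : ℝ → ℝ)
    (hF0 : |F 0| ≤ η / 1000) (hG0 : |G 0| ≤ η / 1000)
    (hFlip : ∀ x ∈ Set.Icc (-η) η, ∀ y ∈ Set.Icc (-η) η, |F x - F y| ≤ ε * |x - y|)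
    (hGlip : ∀ x ∈ Set.Icc (-η) η, ∀ y ∈ Set.Icc (-η) η, |G x - G y| ≤ ε * |x - y|) :
    (Set.MapsTo F (Set.Icc (-(η / 100)) (η / 100)) (Set.Icc (-(η / 100)) (η / 100))) ∧
    (Set.MapsTo G (Set.Icc (-(η / 100)) (η / 100)) (Set.Icc (-(η / 100)) (η / 100))) ∧
    ∃ w v : ℝ, w ∈ Set.Icc (-(η / 100)) (η / 100) ∧ G (F w) = w ∧
      (∀ w' ∈ Set.Icc (-(η / 100)) (η / 100), G (F w') = w' → w' = w) ∧
      v = F w ∧ w = G v ∧ |v| ≤ η / 100 ∧ |w| ≤ η / 100 ∧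
      (∀ v' ∈ Set.Icc (-η) η, ∀ w' ∈ Set.Icc (-η) η,
        v' = F w' → w' = G v' → v' = v ∧ w' = w) := by
  have hsub : Set.Icc (-(η / 100)) (η / 100) ⊆ Set.Icc (-η) η :=
    Set.Icc_subset_Icc (by linarith) (by linarith)
  have h0mem : (0 : ℝ) ∈ Set.Icc (-η) η := ⟨by linarith, by linarith⟩
  -- key bound: an ε-Lipschitz map with |H 0| ≤ η/1000 maps the small interval into itself
  have key : ∀ H : ℝ → ℝ, |H 0| ≤ η / 1000 →
      (∀ x ∈ Set.Icc (-η) η, ∀ y ∈ Set.Icc (-η) η, |H x - H y| ≤ ε * |x - y|) →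
      ∀ x : ℝ, |x| ≤ η / 100 → |H x| ≤ η / 100 := by
    intro H h0 hlip x hx
    have hx' : x ∈ Set.Icc (-η) η := by
      rw [abs_le] at hx
      exact ⟨by linarith [hx.1], by linarith [hx.2]⟩
    have h1 := hlip x hx' 0 h0mem
    rw [sub_zero] at h1
    have h2 : |H x| ≤ |H x - H 0| + |H 0| := by
      calc |H x| = |(H x - H 0) + H 0| := by ring_nf
        _ ≤ |H x - H 0| + |H 0| := abs_add_le _ _
    have h3 : ε * |x| ≤ ε * (η / 100) := by
      exact mul_le_mul_of_nonneg_left hx hε0.le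
    nlinarith [abs_nonneg x]
  have hFmaps : Set.MapsTo F (Set.Icc (-(η / 100)) (η / 100)) (Set.Icc (-(η / 100)) (η / 100)) := by
    intro x hx
    have := key F hF0 hFlip x (abs_le.2 ⟨by linarith [hx.1], hx.2⟩)
    rw [abs_le] at this
    exact ⟨this.1, this.2⟩
  have hGmaps : Set.MapsTo G (Set.Icc (-(η / 100)) (η / 100)) (Set.Icc (-(η / 100)) (η / 100)) := by
    intro x hx
    have := key G hG0 hGlip x (abs_le.2 ⟨by linarith [hx.1], hx.2⟩)
    rw [abs_le] at this
    exact ⟨this.1, this.2⟩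
  -- continuity
  have hcontOf : ∀ H : ℝ → ℝ,
      (∀ x ∈ Set.Icc (-η) η, ∀ y ∈ Set.Icc (-η) η, |H x - H y| ≤ ε * |x - y|) →
      ContinuousOn H (Set.Icc (-η) η) := by
    intro H hlip
    have : LipschitzOnWith ⟨ε, hε0.le⟩ H (Set.Icc (-η) η) := by
      refine lipschitzOnWith_iff_dist_le_mul.2 ?_
      intro x hx y hy
      simp only [Real.dist_eq]; exact hlip x hx y hy
    exact this.continuousOn
  have hFcont := hcontOf F hFlip
  have hGcont := hcontOf G hGlip
  have hFmaps' : Set.MapsTo F (Set.Icc (-(η / 100)) (η / 100)) (Set.Icc (-η) η) :=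
    fun x hx => hsub (hFmaps hx)
  have hhcont : ContinuousOn (fun x => G (F x) - x) (Set.Icc (-(η / 100)) (η / 100)) := by
    exact ((hGcont.comp (hFcont.mono hsub) hFmaps').sub continuousOn_id)
  have hab : -(η / 100) ≤ η / 100 := by linarith
  -- endpoint signs
  have hGFb : |G (F (η / 100))| ≤ η / 100 :=
    key G hG0 hGlip _ (key F hF0 hFlip _ (by rw [abs_of_nonneg (by linarith)]))
  have hGFa : |G (F (-(η / 100)))| ≤ η / 100 :=
    key G hG0 hGlip _ (key F hF0 hFlip _ (by rw [abs_of_nonpos (by linarith)]; linarith))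
  have hmem0 : (0 : ℝ) ∈ Set.Icc ((fun x => G (F x) - x) (η / 100))
      ((fun x => G (F x) - x) (-(η / 100))) := by
    rw [abs_le] at hGFa hGFb
    exact ⟨by simp only []; linarith [hGFb.2], by simp only []; linarith [hGFa.1]⟩
  obtain ⟨w, hw, hw0⟩ := intermediate_value_Icc' hab hhcont hmem0
  have hGFw : G (F w) = w := by
    have : G (F w) - w = 0 := hw0
    linarith
  refine ⟨hFmaps, hGmaps, w, F w, hw, hGFw, ?_, rfl, hGFw.symm, ?_, ?_, ?_⟩
  · -- uniqueness in small interval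
    intro w' hw' heq
    have hwB : w ∈ Set.Icc (-η) η := hsub hw
    have hw'B : w' ∈ Set.Icc (-η) η := hsub hw'
    have hFwB : F w ∈ Set.Icc (-η) η := hsub (hFmaps hw)
    have hFw'B : F w' ∈ Set.Icc (-η) η := hsub (hFmaps hw')
    have h1 : |F w' - F w| ≤ ε * |w' - w| := hFlip w' hw'B w hwB
    have h2 : |G (F w') - G (F w)| ≤ ε * |F w' - F w| := hGlip _ hFw'B _ hFwB
    rw [heq, hGFw] at h2
    have h3 : |w' - w| ≤ ε * (ε * |w' - w|) :=
      h2.trans (mul_le_mul_of_nonneg_left h1 hε0.le)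
    have h4 : |w' - w| = 0 := by
      nlinarith [abs_nonneg (w' - w), mul_self_lt_mul_self hε0.le hε]
    have := abs_eq_zero.1 h4
    linarith
  · exact key F hF0 hFlip w (abs_le.2 ⟨by linarith [hw.1], hw.2⟩)
  · exact abs_le.2 ⟨by linarith [hw.1], hw.2⟩
  · -- global uniqueness
    intro v' hv' w' hw' hveq hweq
    have hwB : w ∈ Set.Icc (-η) η := hsub hw
    have hFwB : F w ∈ Set.Icc (-η) η := hsub (hFmaps hw)
    have h1 : |F w' - F w| ≤ ε * |w' - w| := hFlip w' hw' w hwB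
    have h2 : |G v' - G (F w)| ≤ ε * |v' - F w| := hGlip v' hv' _ hFwB
    have h3 : |w' - w| ≤ ε * (ε * |w' - w|) := by
      calc |w' - w| = |G v' - G (F w)| := by rw [hweq, hGFw]
        _ ≤ ε * |v' - F w| := h2
        _ = ε * |F w' - F w| := by rw [hveq]
        _ ≤ ε * (ε * |w' - w|) := mul_le_mul_of_nonneg_left h1 hε0.le
    have h4 : |w' - w| = 0 := by
      nlinarith [abs_nonneg (w' - w), mul_self_lt_mul_self hε0.le hε]
    have hww : w' = w := by have := abs_eq_zero.1 h4; linarith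
    exact ⟨by rw [hveq, hww], hww⟩
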